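/- Let (N, L, K, R, P) be twice differentiable real functions on an open interval I ⊂ (0,∞) with N, L, K positive, satisfying the full static cylindrically symmetric Einstein–Yang–Mills ODE system. Then the Noether charge Q₂(r) = (1/2)·N L K·(N'/N − K'/K − 2 R R'/K²) has vanishing derivative on I, i.e. Q₂ is constant along every solution. -/

import Mathlib

open Set

/-- The full static cylindrically symmetric Einstein–Yang–Mills ODE system in
the Kasner gauge, for five radial functions `N, L, K` (metric) and `R, P`
(Yang–Mills), stated on a set `I`. -/
def EYMSystem (N L K R P : ℝ → ℝ) (I : Set ℝ) : Prop :=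
  ∀ r ∈ I,
    deriv (fun s => deriv N s * L s * K s) r =
      N r * L r * K r *
        ((deriv P r) ^ 2 / (L r) ^ 2 + (deriv R r) ^ 2 / (K r) ^ 2 +
          (P r) ^ 2 * (R r) ^ 2 / ((L r) ^ 2 * (K r) ^ 2)) ∧
    deriv (fun s => N s * deriv L s * K s) r =
      N r * L r * K r *
        (-(deriv P r) ^ 2 / (L r) ^ 2 + (deriv R r) ^ 2 / (K r) ^ 2 -
          (P r) ^ 2 * (R r) ^ 2 / ((L r) ^ 2 * (K r) ^ 2)) ∧
    deriv (fun s => N s * L s * deriv K s) r =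
      N r * L r * K r *
        ((deriv P r) ^ 2 / (L r) ^ 2 - (deriv R r) ^ 2 / (K r) ^ 2 -
          (P r) ^ 2 * (R r) ^ 2 / ((L r) ^ 2 * (K r) ^ 2)) ∧
    deriv (fun s => N s * L s / K s * deriv R s) r =
      N r / (L r * K r) * (R r * (P r) ^ 2) ∧
    deriv (fun s => N s * K s / L s * deriv P s) r =
      N r / (L r * K r) * (P r * (R r) ^ 2)

/-- The Noether charge
`Q₂ = (1/2) N L K (N'/N − K'/K − 2 R R'/K²)` has vanishing derivative on `I`,
i.e. it is constant along every solution of the EYM system. -/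
theorem stmt_7 (N L K R P : ℝ → ℝ) (I : Set ℝ)
    (hIopen : IsOpen I) (hIconn : IsPreconnected I) (hIsub : I ⊆ Ioi 0)
    (hN : ∀ r ∈ I, 0 < N r) (hL : ∀ r ∈ I, 0 < L r) (hK : ∀ r ∈ I, 0 < K r)
    (hNd : ContDiffOn ℝ 2 N I) (hLd : ContDiffOn ℝ 2 L I)
    (hKd : ContDiffOn ℝ 2 K I) (hRd : ContDiffOn ℝ 2 R I)
    (hPd : ContDiffOn ℝ 2 P I)
    (h : EYMSystem N L K R P I) :
    ∀ r ∈ I,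
      deriv (fun s =>
        (1 / 2) * (N s * L s * K s) *
          (deriv N s / N s - deriv K s / K s - 2 * R s * deriv R s / (K s) ^ 2)) r
        = 0 := by
  intro r hr
  -- rewrite the Noether charge in polynomial-in-derivatives form on I
  have hmem : I ∈ nhds r := hIopen.mem_nhds hr
  have hEq : ∀ s ∈ I,
      (1 / 2) * (N s * L s * K s) *
        (deriv N s / N s - deriv K s / K s - 2 * R s * deriv R s / (K s) ^ 2)
      = (1 / 2) * ((deriv N s * L s * K s) - (N s * L s * deriv K s)
          - 2 * (R s * (N s * L s / K s * deriv R s))) := by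
    intro s hs
    have hNs := (hN s hs).ne'
    have hKs := (hK s hs).ne'
    field_simp
  have he : (fun s =>
      (1 / 2) * (N s * L s * K s) *
        (deriv N s / N s - deriv K s / K s - 2 * R s * deriv R s / (K s) ^ 2))
      =ᶠ[nhds r] (fun s => (1 / 2) * ((deriv N s * L s * K s)
          - (N s * L s * deriv K s)
          - 2 * (R s * (N s * L s / K s * deriv R s)))) :=
    Filter.eventuallyEq_of_mem hmem hEq
  rw [he.deriv_eq]
  -- differentiability facts
  have hN1 : ContDiffOn ℝ 1 (deriv N) I := hNd.deriv_of_isOpen hIopen (by norm_num)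
  have hK1 : ContDiffOn ℝ 1 (deriv K) I := hKd.deriv_of_isOpen hIopen (by norm_num)
  have hR1 : ContDiffOn ℝ 1 (deriv R) I := hRd.deriv_of_isOpen hIopen (by norm_num)
  have dN' : DifferentiableAt ℝ (deriv N) r :=
    ((hN1.differentiableOn one_ne_zero) r hr).differentiableAt hmem
  have dK' : DifferentiableAt ℝ (deriv K) r :=
    ((hK1.differentiableOn one_ne_zero) r hr).differentiableAt hmem
  have dR' : DifferentiableAt ℝ (deriv R) r :=
    ((hR1.differentiableOn one_ne_zero) r hr).differentiableAt hmem
  have dN : DifferentiableAt ℝ N r :=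
    ((hNd.differentiableOn (by norm_num)) r hr).differentiableAt hmem
  have dL : DifferentiableAt ℝ L r :=
    ((hLd.differentiableOn (by norm_num)) r hr).differentiableAt hmem
  have dK : DifferentiableAt ℝ K r :=
    ((hKd.differentiableOn (by norm_num)) r hr).differentiableAt hmem
  have dR : DifferentiableAt ℝ R r :=
    ((hRd.differentiableOn (by norm_num)) r hr).differentiableAt hmem
  have hKne : K r ≠ 0 := (hK r hr).ne'
  have hNne : N r ≠ 0 := (hN r hr).ne'
  have hLne : L r ≠ 0 := (hL r hr).ne'
  have d1 : DifferentiableAt ℝ (fun s => deriv N s * L s * K s) r :=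
    (dN'.mul dL).mul dK
  have d2 : DifferentiableAt ℝ (fun s => N s * L s * deriv K s) r :=
    (dN.mul dL).mul dK'
  have dg : DifferentiableAt ℝ (fun s => N s * L s / K s * deriv R s) r :=
    (((dN.mul dL).div dK hKne)).mul dR'
  have d3 : DifferentiableAt ℝ (fun s => R s * (N s * L s / K s * deriv R s)) r :=
    dR.mul dg
  -- compute the derivative
  rw [deriv_const_mul _ (show DifferentiableAt ℝ (fun s => deriv N s * L s * K s - N s * L s * deriv K s
      - 2 * (R s * (N s * L s / K s * deriv R s))) r from
      (d1.sub d2).sub ((differentiable_const (2:ℝ)).differentiableAt.mul d3)),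
    deriv_fun_sub (show DifferentiableAt ℝ (fun s => deriv N s * L s * K s - N s * L s * deriv K s) r from
      d1.sub d2) (show DifferentiableAt ℝ (fun s => 2 * (R s * (N s * L s / K s * deriv R s))) r from
      (differentiable_const (2:ℝ)).differentiableAt.mul d3),
    deriv_fun_sub d1 d2, deriv_const_mul _ d3, deriv_fun_mul dR dg]
  obtain ⟨h1, -, h3, h4, -⟩ := h r hr
  rw [h1, h3, h4]
  field_simp
  ring
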